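/- Fix r ≥ 0 and define f, g : ℝ → ℝ by f(s) = h(√((δ + r)² + s²) − δ) · (δ + r)/√((δ + r)² + s²) and g(s) = −h(√((δ + r)² + s²) − δ) · s/√((δ + r)² + s²) (the tangential and normal components of the parallel laminar flow in Cartesian coordinates based at a boundary point). Then the second derivatives at s = 0 satisfy f''(0) = (1/(r + δ))(α₁ − α₂ r − h(r)/(r + δ)) and g''(0) = 0. Moreover the function r ↦ f(0) = h(r) has constant second derivative −α₂ in r. -/

import Mathlib

noncomputable section

/-- Poiseuille-type speed profile `h(r) = α₁ r − (α₂/2) r²`. -/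
def prof (α₁ α₂ r : ℝ) : ℝ := α₁ * r - α₂ / 2 * r ^ 2

/-- Second derivatives of the tangential and normal components of the parallel laminar
flow in Cartesian coordinates based at a boundary point:
`f''(0) = (1/(r + δ))(α₁ − α₂ r − h(r)/(r + δ))`, `g''(0) = 0`, and the profile `h`
has constant second derivative `−α₂`. -/
theorem second_derivatives_of_components
    (δ α₁ α₂ : ℝ) (hδ : 0 < δ) (hα₁ : 0 < α₁) (hα₂ : 0 < α₂)
    (r : ℝ) (hr : 0 ≤ r)
    (f g : ℝ → ℝ)
    (hf : f = fun s : ℝ =>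
      prof α₁ α₂ (Real.sqrt ((δ + r) ^ 2 + s ^ 2) - δ)
        * ((δ + r) / Real.sqrt ((δ + r) ^ 2 + s ^ 2)))
    (hg : g = fun s : ℝ =>
      -(prof α₁ α₂ (Real.sqrt ((δ + r) ^ 2 + s ^ 2) - δ)
        * (s / Real.sqrt ((δ + r) ^ 2 + s ^ 2)))) :
    deriv (deriv f) 0 = (1 / (r + δ)) * (α₁ - α₂ * r - prof α₁ α₂ r / (r + δ))
    ∧ deriv (deriv g) 0 = 0
    ∧ ∀ t : ℝ, deriv (deriv (prof α₁ α₂)) t = -α₂ := by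
  have hprof : ∀ x : ℝ, HasDerivAt (prof α₁ α₂) (α₁ - α₂ * x) x := by
    intro x
    have h : HasDerivAt (fun y : ℝ => α₁ * y - α₂ / 2 * y ^ 2) (α₁ - α₂ * x) x := by
      have h0 := ((hasDerivAt_id x).const_mul α₁).sub ((hasDerivAt_pow 2 x).const_mul (α₂ / 2))
      refine h0.congr_deriv ?_
      push_cast
      ring
    have hpe : prof α₁ α₂ = fun y : ℝ => α₁ * y - α₂ / 2 * y ^ 2 := rfl
    rw [hpe]
    exact h
  set c := δ + r with hc
  have hcpos : 0 < c := by positivity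
  set R : ℝ → ℝ := fun s => Real.sqrt (c ^ 2 + s ^ 2) with hRdef
  have hq : ∀ s : ℝ, 0 < c ^ 2 + s ^ 2 := fun s => by positivity
  have hRpos : ∀ s, 0 < R s := fun s => Real.sqrt_pos.2 (hq s)
  have hRne : ∀ s, R s ≠ 0 := fun s => (hRpos s).ne'
  have hR0 : R 0 = c := by
    simp [hRdef, Real.sqrt_sq hcpos.le]
  have hRsq : ∀ s, R s ^ 2 = c ^ 2 + s ^ 2 := fun s => Real.sq_sqrt (hq s).le
  have hR : ∀ s, HasDerivAt R (s / R s) s := by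
    intro s
    have h1 : HasDerivAt (fun s : ℝ => c ^ 2 + s ^ 2) (2 * s) s := by
      simpa using (hasDerivAt_pow 2 s).const_add (c ^ 2)
    have h2 := (Real.hasDerivAt_sqrt (hq s).ne').comp s h1
    refine h2.congr_deriv ?_
    field_simp [hRdef]
    rw [show √(c ^ 2 + s ^ 2) = R s from rfl, mul_div_assoc, div_self (hRne s), mul_one]
  have hP : ∀ s, HasDerivAt (fun s => prof α₁ α₂ (R s - δ))
      ((α₁ - α₂ * (R s - δ)) * (s / R s)) s :=
    fun s => by have hx := (hprof (R s - δ)).comp s ((hR s).sub_const δ); exact hx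
  -- closed form for deriv f
  set G : ℝ → ℝ := fun s =>
      (α₁ - α₂ * (R s - δ)) * c / (R s) ^ 2
        - prof α₁ α₂ (R s - δ) * c / (R s) ^ 3 with hG
  have hf' : ∀ s, HasDerivAt f (G s * s) s := by
    intro s
    have h3 : HasDerivAt (fun s => c / R s) (-(c * (s / R s)) / (R s) ^ 2) s := by
      have hx := (hasDerivAt_const s c).div (hR s) (hRne s); simp at hx ⊢; exact hx
    have h4 := (hP s).mul h3
    rw [hf]
    refine h4.congr_deriv ?_
    rw [hG]
    field_simp
    ring
  have hderivf : deriv f = fun s => G s * s := funext fun s => (hf' s).deriv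
  have hGdiff : DifferentiableAt ℝ G 0 := by
    have hRd : DifferentiableAt ℝ R 0 := (hR 0).differentiableAt
    have hPd : DifferentiableAt ℝ (fun s => prof α₁ α₂ (R s - δ)) 0 := (hP 0).differentiableAt
    have d1 : DifferentiableAt ℝ (fun s => (α₁ - α₂ * (R s - δ)) * c / (R s) ^ 2) 0 :=
      (((differentiableAt_const α₁).sub ((hRd.sub_const δ).const_mul α₂)).mul_const c).div
        (hRd.pow 2) (by positivity)
    have d2 : DifferentiableAt ℝ (fun s => prof α₁ α₂ (R s - δ) * c / (R s) ^ 3) 0 :=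
      (hPd.mul_const c).div (hRd.pow 3) (by positivity)
    exact d1.sub d2
  have hE : HasDerivAt (fun s => G s * s) (deriv G 0 * 0 + G 0 * 1) 0 := by
    have hx := hGdiff.hasDerivAt.mul (hasDerivAt_id 0); simp at hx ⊢; exact hx
  have hfval : deriv (deriv f) 0 = G 0 := by
    rw [hderivf]
    simpa using hE.deriv
  refine ⟨?_, ?_, ?_⟩
  · rw [hfval, hG]
    simp only [hR0]
    have : c - δ = r := by rw [hc]; ring
    rw [this]
    rw [show r + δ = c from by rw [hc]; ring]
    field_simp
  · -- g part
    set Eg : ℝ → ℝ := fun s =>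
        -((α₁ - α₂ * (R s - δ)) * s ^ 2 / (R s) ^ 2
          + prof α₁ α₂ (R s - δ) * c ^ 2 / (R s) ^ 3) with hEg
    have hg' : ∀ s, HasDerivAt g (Eg s) s := by
      intro s
      have hdiv : HasDerivAt (fun s => s / R s)
          ((1 * R s - s * (s / R s)) / (R s) ^ 2) s :=
        (hasDerivAt_id s).div (hR s) (hRne s)
      have h4 := ((hP s).mul hdiv).neg
      rw [hg]
      refine h4.congr_deriv ?_
      rw [hEg]
      rw [show (c : ℝ) ^ 2 = R s ^ 2 - s ^ 2 from by rw [hRsq]; ring]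
      field_simp
    have hderivg : deriv g = Eg := funext fun s => (hg' s).deriv
    have hRs0 : HasDerivAt R 0 0 := by simpa using hR 0
    have hP0 : HasDerivAt (fun s => prof α₁ α₂ (R s - δ)) 0 0 := by
      simpa using hP 0
    have hA0 : HasDerivAt (fun s => α₁ - α₂ * (R s - δ)) 0 0 := by
      have hx := (hasDerivAt_const (0:ℝ) α₁).sub ((hRs0.sub_const δ).const_mul α₂); simp at hx ⊢; exact hx
    have hnum1 : HasDerivAt (fun s => (α₁ - α₂ * (R s - δ)) * s ^ 2) 0 0 := by
      have hx := hA0.mul (hasDerivAt_pow 2 0); simp at hx ⊢; exact hx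
    have hden2 : HasDerivAt (fun s => (R s) ^ 2) 0 0 := by
      have hx := hRs0.pow 2; simp at hx ⊢; exact hx
    have hden3 : HasDerivAt (fun s => (R s) ^ 3) 0 0 := by
      have hx := hRs0.pow 3; simp at hx ⊢; exact hx
    have h1 : HasDerivAt (fun s => (α₁ - α₂ * (R s - δ)) * s ^ 2 / (R s) ^ 2) 0 0 := by
      have hx := hnum1.div hden2 (pow_ne_zero 2 (hRne 0)); simp at hx ⊢; exact hx
    have h2 : HasDerivAt (fun s => prof α₁ α₂ (R s - δ) * c ^ 2 / (R s) ^ 3) 0 0 := by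
      have hx := (hP0.mul_const (c ^ 2)).div hden3 (pow_ne_zero 3 (hRne 0)); simp at hx ⊢; exact hx
    have hEg0 : HasDerivAt Eg (-(0 + 0)) 0 := (h1.add h2).neg
    rw [hderivg]
    simpa using hEg0.deriv
  · intro t
    have hd1 : deriv (prof α₁ α₂) = fun x => α₁ - α₂ * x :=
      funext fun x => (hprof x).deriv
    rw [hd1]
    have : HasDerivAt (fun x : ℝ => α₁ - α₂ * x) (-α₂) t := by
      simpa using ((hasDerivAt_id t).const_mul α₂).const_sub α₁
    exact this.deriv
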